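/- A frame F is dense (∀x,y: xRy implies ∃z with xRz and zRy) iff the sequent ♦p ⊢ ♦♦p is valid on F, where ♦φ := ¬■¬φ. -/
import Mathlib


/-- Formulas of the language with ¬, ∧, ∨, □, ■, 𝐈 and ▲. -/
inductive Form : Type
  | var : ℕ → Form
  | neg : Form → Form
  | conj : Form → Form → Form
  | disj : Form → Form → Form
  | box : Form → Form
  | bbox : Form → Form
  | ign : Form → Form
  | tri : Form → Form

/-- A Kripke model for Belnap–Dunn modal logic. -/
structure Model (W : Type) where
  R : W → W → Prop
  vp : ℕ → W → Prop
  vn : ℕ → W → Prop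

mutual
  /-- support of truth -/
  def tr {W : Type} (M : Model W) : Form → W → Prop
    | .var n, w => M.vp n w
    | .neg φ, w => fa M φ w
    | .conj φ ψ, w => tr M φ w ∧ tr M ψ w
    | .disj φ ψ, w => tr M φ w ∨ tr M ψ w
    | .box φ, w => ∀ w', M.R w w' → tr M φ w'
    | .bbox φ, w => (∀ w', M.R w w' → tr M φ w') ∧
        ∀ w₁ w₂, M.R w w₁ → M.R w w₂ → fa M φ w₁ → fa M φ w₂
    | .ign φ, w => tr M φ w ∧ (∀ w', M.R w w' → w' ≠ w → fa M φ w') ∧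
        ∀ w₁ w₂, M.R w w₁ → w₁ ≠ w → M.R w w₂ → w₂ ≠ w → tr M φ w₁ → tr M φ w₂
    | .tri φ, w => (∀ w₁ w₂, M.R w w₁ → M.R w w₂ →
          (tr M φ w₁ → tr M φ w₂) ∧ (fa M φ w₁ → fa M φ w₂)) ∧
        ∀ w', M.R w w' → tr M φ w' ∨ fa M φ w'
  /-- support of falsity -/
  def fa {W : Type} (M : Model W) : Form → W → Prop
    | .var n, w => M.vn n w
    | .neg φ, w => tr M φ w
    | .conj φ ψ, w => fa M φ w ∨ fa M ψ w
    | .disj φ ψ, w => fa M φ w ∧ fa M ψ w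
    | .box φ, w => ∃ w', M.R w w' ∧ fa M φ w'
    | .bbox φ, w => (∃ w', M.R w w' ∧ fa M φ w') ∨
        ∃ w₁ w₂, M.R w w₁ ∧ M.R w w₂ ∧ tr M φ w₁ ∧ ¬ tr M φ w₂
    | .ign φ, w => fa M φ w ∨ (∃ w', M.R w w' ∧ w' ≠ w ∧ tr M φ w') ∨
        ∃ w₁ w₂, (M.R w w₁ ∧ w₁ ≠ w) ∧ (M.R w w₂ ∧ w₂ ≠ w) ∧ ¬ fa M φ w₁ ∧ fa M φ w₂
    | .tri φ, w => (∃ w₁ w₂, M.R w w₁ ∧ M.R w w₂ ∧ tr M φ w₁ ∧ ¬ tr M φ w₂) ∨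
        (∃ w₁ w₂, M.R w w₁ ∧ M.R w w₂ ∧ fa M φ w₁ ∧ ¬ fa M φ w₂) ∨
        (∃ w₁ w₂, M.R w w₁ ∧ M.R w w₂ ∧ tr M φ w₁ ∧ fa M φ w₂)
end

/-- φ contains an occurrence of □ -/
def hasBox : Form → Prop
  | .var _ => False
  | .neg φ => hasBox φ
  | .conj φ ψ => hasBox φ ∨ hasBox ψ
  | .disj φ ψ => hasBox φ ∨ hasBox ψ
  | .box _ => True
  | .bbox φ => hasBox φ
  | .ign φ => hasBox φ
  | .tri φ => hasBox φ

/-- φ contains an occurrence of ■ -/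
def hasBBox : Form → Prop
  | .var _ => False
  | .neg φ => hasBBox φ
  | .conj φ ψ => hasBBox φ ∨ hasBBox ψ
  | .disj φ ψ => hasBBox φ ∨ hasBBox ψ
  | .box φ => hasBBox φ
  | .bbox _ => True
  | .ign φ => hasBBox φ
  | .tri φ => hasBBox φ

/-- φ contains an occurrence of 𝐈 -/
def hasIgn : Form → Prop
  | .var _ => False
  | .neg φ => hasIgn φ
  | .conj φ ψ => hasIgn φ ∨ hasIgn ψ
  | .disj φ ψ => hasIgn φ ∨ hasIgn ψ
  | .box φ => hasIgn φ
  | .bbox φ => hasIgn φ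
  | .ign _ => True
  | .tri φ => hasIgn φ

/-- φ contains an occurrence of ▲ -/
def hasTri : Form → Prop
  | .var _ => False
  | .neg φ => hasTri φ
  | .conj φ ψ => hasTri φ ∨ hasTri ψ
  | .disj φ ψ => hasTri φ ∨ hasTri ψ
  | .box φ => hasTri φ
  | .bbox φ => hasTri φ
  | .ign φ => hasTri φ
  | .tri _ => True

/-- validity of the sequent φ ⊢ χ on the frame (W,R) -/
def validOn {W : Type} (R : W → W → Prop) (φ χ : Form) : Prop :=
  ∀ (vp vn : ℕ → W → Prop) (w : W), tr ⟨R, vp, vn⟩ φ w → tr ⟨R, vp, vn⟩ χ w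

/-- ♦φ := ¬■¬φ -/
def dia (φ : Form) : Form := .neg (.bbox (.neg φ))

/-- a frame is dense iff ♦p ⊢ ♦♦p is valid on it. -/
theorem dense_definability {W : Type} [Nonempty W] (R : W → W → Prop) :
    (∀ x y, R x y → ∃ z, R x z ∧ R z y) ↔
      validOn R (dia (.var 0)) (dia (dia (.var 0))) := by
  constructor
  · intro hd vp vn w h
    simp only [dia, tr, fa] at h ⊢
    rcases h with ⟨w', hww', hp⟩ | ⟨w₁, w₂, h1, h2, hf1, hf2⟩
    · obtain ⟨z, hwz, hzw'⟩ := hd w w' hww'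
      exact Or.inl ⟨z, hwz, Or.inl ⟨w', hzw', hp⟩⟩
    · obtain ⟨z₁, hwz1, hz1w1⟩ := hd w w₁ h1
      obtain ⟨z₂, hwz2, hz2w2⟩ := hd w w₂ h2
      by_cases hc : (∀ z', R z₁ z' → vn 0 z') ∧
          ∀ a b, R z₁ a → R z₁ b → vp 0 a → vp 0 b
      · exact Or.inr ⟨z₁, z₂, hwz1, hwz2, hc,
          fun ⟨hall, _⟩ => hf2 (hall w₂ hz2w2)⟩
      · refine Or.inl ⟨z₁, hwz1, ?_⟩
        rcases not_and_or.mp hc with hA | hB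
        · push_neg at hA
          obtain ⟨z', hz', hnz'⟩ := hA
          exact Or.inr ⟨w₁, z', hz1w1, hz', hf1, hnz'⟩
        · push_neg at hB
          obtain ⟨a, b, ha, hb, hpa, hpb⟩ := hB
          exact Or.inl ⟨a, ha, hpa⟩
  · intro hv x y hxy
    have h := hv (fun _ w => w = y) (fun _ _ => True) x
    simp only [dia, tr, fa] at h
    have h' := h (Or.inl ⟨y, hxy, rfl⟩)
    rcases h' with ⟨z, hxz, hz⟩ | ⟨z₁, z₂, hxz1, hxz2, _, hn⟩
    · rcases hz with ⟨w', hzw', rfl⟩ | ⟨_, _, _, _, _, hfalse⟩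
      · exact ⟨z, hxz, hzw'⟩
      · exact absurd trivial hfalse
    · rcases not_and_or.mp hn with hA | hB
      · exact absurd (fun _ _ => trivial) hA
      · push_neg at hB
        obtain ⟨a, b, ha, hb, rfl, hbne⟩ := hB
        exact ⟨z₂, hxz2, ha⟩
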